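/- For positive integers N, l with l < N, the mask â(ξ) of the pseudo spline of type II with order (N,l) satisfies |â(ξ)|² + |â(ξ+π)|² ≤ |â(ξ)| + |â(ξ+π)| ≤ 1 for all real ξ. -/

import Mathlib

open Real Finset

noncomputable def pseudoMaskII (N l : ℕ) (ξ : ℝ) : ℝ :=
  Real.cos (ξ / 2) ^ (2 * N) *
    ∑ j ∈ Finset.range (l + 1), ((N - 1 + j).choose j : ℝ) * Real.sin (ξ / 2) ^ (2 * j)

lemma mask_ident (N : ℕ) (hN : 1 ≤ N) (l : ℕ) (x : ℝ) :
    (1 - x) ^ N * ∑ j ∈ Finset.range (l + 1), ((N - 1 + j).choose j : ℝ) * x ^ j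
      = ∑ j ∈ Finset.range (l + 1), ((N + l).choose j : ℝ) * x ^ j * (1 - x) ^ (N + l - j) := by
  induction l with
  | zero => simp
  | succ l ih =>
    rw [Finset.sum_range_succ, mul_add, ih]
    have hNl : N - 1 + (l + 1) = N + l := by omega
    rw [hNl]
    have S1 : ∑ j ∈ Finset.range (l + 1), ((N + l).choose j : ℝ) * x ^ j * (1 - x) ^ (N + l - j)
        = ∑ j ∈ Finset.range (l + 1), ((N + l).choose j : ℝ) * x ^ j * (1 - x) ^ (N + l + 1 - j)
          + ∑ j ∈ Finset.range (l + 1), ((N + l).choose j : ℝ) * x ^ (j + 1) * (1 - x) ^ (N + l - j) := by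
      rw [← Finset.sum_add_distrib]
      apply Finset.sum_congr rfl
      intro j hj
      have hj' : j ≤ l := by simpa [Nat.lt_succ_iff] using hj
      have he : N + l + 1 - j = (N + l - j) + 1 := by omega
      rw [he, pow_succ, pow_succ]
      ring
    have S2 : ∑ j ∈ Finset.range (l + 1), ((N + l).choose j : ℝ) * x ^ j * (1 - x) ^ (N + l + 1 - j)
        = (1 - x) ^ (N + l + 1)
          + ∑ j ∈ Finset.range l, ((N + l).choose (j + 1) : ℝ) * x ^ (j + 1) * (1 - x) ^ (N + l - j) := by
      rw [Finset.sum_range_succ']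
      have : ∀ j ∈ Finset.range l, ((N + l).choose (j + 1) : ℝ) * x ^ (j + 1) * (1 - x) ^ (N + l + 1 - (j + 1))
          = ((N + l).choose (j + 1) : ℝ) * x ^ (j + 1) * (1 - x) ^ (N + l - j) := by
        intro j hj
        have h : N + l + 1 - (j + 1) = N + l - j := by omega
        rw [h]
      rw [Finset.sum_congr rfl this]
      simp [add_comm]
    have S3 : ∑ j ∈ Finset.range (l + 1), ((N + l).choose (j + 1) : ℝ) * x ^ (j + 1) * (1 - x) ^ (N + l - j)
        = (∑ j ∈ Finset.range l, ((N + l).choose (j + 1) : ℝ) * x ^ (j + 1) * (1 - x) ^ (N + l - j))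
          + ((N + l).choose (l + 1) : ℝ) * x ^ (l + 1) * (1 - x) ^ N := by
      rw [Finset.sum_range_succ]
      have h : N + l - l = N := by omega
      rw [h]
    have RHS : ∑ j ∈ Finset.range (l + 1 + 1), ((N + (l + 1)).choose j : ℝ) * x ^ j * (1 - x) ^ (N + (l + 1) - j)
        = (1 - x) ^ (N + l + 1)
          + (∑ j ∈ Finset.range (l + 1), ((N + l).choose j : ℝ) * x ^ (j + 1) * (1 - x) ^ (N + l - j)
            + ∑ j ∈ Finset.range (l + 1), ((N + l).choose (j + 1) : ℝ) * x ^ (j + 1) * (1 - x) ^ (N + l - j)) := by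
      rw [Finset.sum_range_succ']
      have : ∀ j ∈ Finset.range (l + 1),
          ((N + (l + 1)).choose (j + 1) : ℝ) * x ^ (j + 1) * (1 - x) ^ (N + (l + 1) - (j + 1))
          = ((N + l).choose j : ℝ) * x ^ (j + 1) * (1 - x) ^ (N + l - j)
            + ((N + l).choose (j + 1) : ℝ) * x ^ (j + 1) * (1 - x) ^ (N + l - j) := by
        intro j hj
        have h1 : N + (l + 1) = (N + l) + 1 := by omega
        rw [h1]
        have h2 : N + l + 1 - (j + 1) = N + l - j := by omega
        rw [h2, Nat.choose_succ_succ]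
        push_cast
        ring
      rw [Finset.sum_congr rfl this, Finset.sum_add_distrib]
      have h0 : N + (l + 1) - 0 = N + l + 1 := by omega
      simp [h0]
      ring
    rw [RHS, S1, S2, S3]
    ring

lemma mask_form (N l : ℕ) (ξ : ℝ) :
    pseudoMaskII N l ξ = (Real.cos (ξ / 2) ^ 2) ^ N *
      ∑ j ∈ Finset.range (l + 1), ((N - 1 + j).choose j : ℝ) * (Real.sin (ξ / 2) ^ 2) ^ j := by
  unfold pseudoMaskII
  rw [← pow_mul]
  congr 1
  apply Finset.sum_congr rfl
  intro j _
  rw [← pow_mul]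

lemma mask_shift (N l : ℕ) (ξ : ℝ) :
    pseudoMaskII N l (ξ + π) = (Real.sin (ξ / 2) ^ 2) ^ N *
      ∑ j ∈ Finset.range (l + 1), ((N - 1 + j).choose j : ℝ) * (Real.cos (ξ / 2) ^ 2) ^ j := by
  rw [mask_form]
  have h : (ξ + π) / 2 = ξ / 2 + π / 2 := by ring
  rw [h, Real.cos_add_pi_div_two, Real.sin_add_pi_div_two]
  simp [neg_pow]

theorem pseudo_spline_mask_subQMF (N l : ℕ) (hl : 0 < l) (hlN : l < N) (ξ : ℝ) :
    |pseudoMaskII N l ξ| ^ 2 + |pseudoMaskII N l (ξ + π)| ^ 2 ≤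
      |pseudoMaskII N l ξ| + |pseudoMaskII N l (ξ + π)| ∧
    |pseudoMaskII N l ξ| + |pseudoMaskII N l (ξ + π)| ≤ 1 := by
  have hN : 1 ≤ N := by omega
  set s : ℝ := Real.sin (ξ / 2) ^ 2 with hs_def
  set c : ℝ := Real.cos (ξ / 2) ^ 2 with hc_def
  have hs : 0 ≤ s := sq_nonneg _
  have hc : 0 ≤ c := sq_nonneg _
  have hsc : s + c = 1 := Real.sin_sq_add_cos_sq _
  have hcs : c = 1 - s := by linarith
  have hsc' : s = 1 - c := by linarith
  set T : ℕ → ℝ := fun k => ((N + l).choose k : ℝ) * s ^ k * c ^ (N + l - k) with hT_def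
  have hT : ∀ k, 0 ≤ T k := by
    intro k
    apply mul_nonneg (mul_nonneg (by positivity) (by positivity)) (by positivity)
  have ha : pseudoMaskII N l ξ = ∑ k ∈ Finset.range (l + 1), T k := by
    rw [mask_form, ← hs_def, ← hc_def, hcs, mask_ident N hN l s, ← hcs]
  have ha' : pseudoMaskII N l (ξ + π)
      = ∑ k ∈ (Finset.range (l + 1)).image (fun j => N + l - j), T k := by
    rw [mask_shift, ← hs_def, ← hc_def, hsc', mask_ident N hN l c]
    rw [Finset.sum_image]
    · apply Finset.sum_congr rfl
      intro j hj
      have hj' : j ≤ l := by simpa [Nat.lt_succ_iff] using hj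
      have h1 : N + l - (N + l - j) = j := by omega
      have h2 : (N + l).choose (N + l - j) = (N + l).choose j := by
        rw [Nat.choose_symm (by omega : j ≤ N + l)]
      simp only [hT_def, h1, h2, hcs]
      ring
    · intro x hx y hy hxy
      have : x ≤ l := by simpa [Nat.lt_succ_iff] using hx
      have : y ≤ l := by simpa [Nat.lt_succ_iff] using hy
      simp only at hxy
      omega
  have hdisj : Disjoint (Finset.range (l + 1)) ((Finset.range (l + 1)).image (fun j => N + l - j)) := by
    rw [Finset.disjoint_left]
    intro k hk hk'
    have h1 : k ≤ l := by simpa [Nat.lt_succ_iff] using hk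
    obtain ⟨j, hj, hjk⟩ := Finset.mem_image.mp hk'
    have : j ≤ l := by simpa [Nat.lt_succ_iff] using hj
    omega
  have hsub : Finset.range (l + 1) ∪ (Finset.range (l + 1)).image (fun j => N + l - j)
      ⊆ Finset.range (N + l + 1) := by
    intro k hk
    rcases Finset.mem_union.mp hk with h | h
    · have : k ≤ l := by simpa [Nat.lt_succ_iff] using h
      simp [Nat.lt_succ_iff]; omega
    · obtain ⟨j, hj, hjk⟩ := Finset.mem_image.mp h
      simp [Nat.lt_succ_iff]; omega
  have htot : ∑ k ∈ Finset.range (N + l + 1), T k = 1 := by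
    have := add_pow s c (N + l)
    rw [hsc] at this
    simp only [one_pow] at this
    rw [hT_def]
    calc ∑ k ∈ Finset.range (N + l + 1), ((N + l).choose k : ℝ) * s ^ k * c ^ (N + l - k)
        = ∑ k ∈ Finset.range (N + l + 1), s ^ k * c ^ (N + l - k) * ((N + l).choose k : ℝ) := by
          apply Finset.sum_congr rfl; intro k _; ring
      _ = 1 := this.symm
  have hsum : pseudoMaskII N l ξ + pseudoMaskII N l (ξ + π) ≤ 1 := by
    rw [ha, ha', ← Finset.sum_union hdisj, ← htot]
    exact Finset.sum_le_sum_of_subset_of_nonneg hsub (fun k _ _ => hT k)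
  have ha0 : 0 ≤ pseudoMaskII N l ξ := by
    rw [ha]; exact Finset.sum_nonneg fun k _ => hT k
  have ha'0 : 0 ≤ pseudoMaskII N l (ξ + π) := by
    rw [ha']; exact Finset.sum_nonneg fun k _ => hT k
  rw [abs_of_nonneg ha0, abs_of_nonneg ha'0]
  constructor
  · nlinarith [sq_nonneg (pseudoMaskII N l ξ - pseudoMaskII N l (ξ + π))]
  · exact hsum
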